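/- Let a(t₀,t₁), b(t₀,t₁) be binary quadratic forms over ℂ with nonzero resultant, and let c₁, c₀ ∈ ℂ. If the two determinants det[[a₂,b₂,-c₁],[a₁,b₁,-c₀],[a₀,b₀,0]] and det[[a₂,b₂,0],[a₁,b₁,c₁],[a₀,b₀,c₀]] both vanish (where a = a₂t₀²+a₁t₀t₁+a₀t₁², similarly b), then c₀ = c₁ = 0. -/

import Mathlib

set_option maxHeartbeats 1000000


/-- Linear-algebra core: if the binary quadratics `a = a₂t₀²+a₁t₀t₁+a₀t₁²` and
`b = b₂t₀²+b₁t₀t₁+b₀t₁²` have nonzero resultant, and the two stated 3×3 determinants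
vanish, then `c₀ = c₁ = 0`. -/
theorem dets_vanish_implies_c_zero
    (a₂ a₁ a₀ b₂ b₁ b₀ c₀ c₁ : ℂ)
    (hres : Matrix.det !![a₂, a₁, a₀, 0; 0, a₂, a₁, a₀; b₂, b₁, b₀, 0; 0, b₂, b₁, b₀] ≠ 0)
    (h₁ : Matrix.det !![a₂, b₂, -c₁; a₁, b₁, -c₀; a₀, b₀, 0] = 0)
    (h₂ : Matrix.det !![a₂, b₂, 0; a₁, b₁, c₁; a₀, b₀, c₀] = 0) :
    c₀ = 0 ∧ c₁ = 0 := by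
  have hD : (a₂*b₀ - a₀*b₂)^2 - (a₂*b₁ - a₁*b₂)*(a₁*b₀ - a₀*b₁) ≠ 0 := by
    intro h
    apply hres
    simp [Matrix.det_succ_row_zero, Fin.sum_univ_succ, Fin.succAbove]
    linear_combination h
  simp [Matrix.det_fin_three] at h₁ h₂
  constructor
  · apply mul_left_cancel₀ hD
    rw [mul_zero]
    linear_combination (a₂*b₀ - a₀*b₂) * h₁ - (a₁*b₀ - a₀*b₁) * h₂
  · apply mul_left_cancel₀ hD
    rw [mul_zero]
    linear_combination (a₂*b₁ - a₁*b₂) * h₁ - (a₂*b₀ - a₀*b₂) * h₂
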